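/- For the closed unit disc B(o,1) ⊆ ℝ², the quantified t-illumination number satisfies i(B(o,1),ρ) = 3 for every ρ with 0 < ρ ≤ 1, and i(B(o,1),ρ) = ∞ for every ρ > 1. -/

import Mathlib

open Metric Set
open scoped RealInnerProductSpace

/-- The quantified t-illumination number `i(K,ε)`: the least `m` for which there exist
unit vectors `r_1, …, r_m` such that every `x ∈ K` satisfies `x + ε • r_i ∈ K` for some `i`;
`∞` if no finite such family exists. -/
noncomputable def iq {n : ℕ} (K : Set (EuclideanSpace ℝ (Fin n))) (ε : ℝ) : ℕ∞ :=
  sInf {m : ℕ∞ | ∃ s : Finset (EuclideanSpace ℝ (Fin n)), (s.card : ℕ∞) = m ∧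
    (∀ r ∈ s, ‖r‖ = 1) ∧ ∀ x ∈ K, ∃ r ∈ s, x + ε • r ∈ K}

/-- The quantified illumination number `c(K,ε)`: the least `m` for which there exist
unit vectors `r_1, …, r_m` such that every `x ∈ K` satisfies `x + ε • r_i ∈ int K` for some `i`;
`∞` if no finite such family exists. -/
noncomputable def cq {n : ℕ} (K : Set (EuclideanSpace ℝ (Fin n))) (ε : ℝ) : ℕ∞ :=
  sInf {m : ℕ∞ | ∃ s : Finset (EuclideanSpace ℝ (Fin n)), (s.card : ℕ∞) = m ∧
    (∀ r ∈ s, ‖r‖ = 1) ∧ ∀ x ∈ K, ∃ r ∈ s, x + ε • r ∈ interior K}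

/-- `B(c, R)` is the circumball of `K`: a closed ball containing `K` of minimal radius. -/
def IsCircumball {n : ℕ} (K : Set (EuclideanSpace ℝ (Fin n)))
    (c : EuclideanSpace ℝ (Fin n)) (R : ℝ) : Prop :=
  K ⊆ closedBall c R ∧ ∀ (c' : EuclideanSpace ℝ (Fin n)) (R' : ℝ), K ⊆ closedBall c' R' → R ≤ R'


lemma norm_sq2 (x : EuclideanSpace ℝ (Fin 2)) : ‖x‖^2 = x 0^2 + x 1^2 := by
  rw [EuclideanSpace.norm_eq, Real.sq_sqrt (by positivity)]
  simp [Fin.sum_univ_two, sq_abs]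

lemma mem_cb (x : EuclideanSpace ℝ (Fin 2)) :
    x ∈ closedBall (0 : EuclideanSpace ℝ (Fin 2)) 1 ↔ x 0^2 + x 1^2 ≤ 1 := by
  rw [mem_closedBall, dist_zero_right, ← norm_sq2]
  constructor
  · intro h; nlinarith [norm_nonneg x]
  · intro h; nlinarith [norm_nonneg x]

lemma norm_eq_one_of (x : EuclideanSpace ℝ (Fin 2)) (h : x 0^2 + x 1^2 = 1) : ‖x‖ = 1 := by
  have h2 := norm_sq2 x
  nlinarith [norm_nonneg x]

lemma key3 (a b s ρ c : ℝ) (hs : s^2 = a^2+b^2) (hs0 : 0 ≤ s) (hs1 : s ≤ 1)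
    (hρ : 0 < ρ) (hρ1 : ρ ≤ 1) (hc : c^2 = 3/4) (hc0 : 0 ≤ c) :
    s^2 + 2*ρ*a + ρ^2 ≤ 1 ∨ s^2 + 2*ρ*(-a/2 + c*b) + ρ^2 ≤ 1 ∨
      s^2 + 2*ρ*(-a/2 - c*b) + ρ^2 ≤ 1 := by
  have hmain : s^2 - ρ*s + ρ^2 ≤ 1 := by
    nlinarith [mul_nonneg (sub_nonneg.2 hs1) (sub_nonneg.2 hρ1),
      mul_nonneg hs0 (sub_nonneg.2 hs1), mul_nonneg hρ.le (sub_nonneg.2 hρ1)]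
  by_cases h : a ≤ -s/2
  · left; nlinarith
  · push_neg at h
    have habs : s - a ≤ 2*c*|b| := by
      rcases le_or_gt s a with h2 | h2
      · nlinarith [mul_nonneg hc0 (abs_nonneg b)]
      · nlinarith [mul_nonneg hc0 (abs_nonneg b), sq_abs b, abs_nonneg b,
          sq_nonneg (2*c*|b| - (s - a)), sq_nonneg (2*c*|b| + (s - a))]
    rcases le_or_gt 0 b with hb | hb
    · right; right
      rw [abs_of_nonneg hb] at habs
      nlinarith [mul_le_mul_of_nonneg_left habs hρ.le]
    · right; left
      rw [abs_of_neg hb] at habs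
      nlinarith [mul_le_mul_of_nonneg_left habs hρ.le]

lemma not_ill (ρ : ℝ) (hρ : 0 < ρ) (x r : EuclideanSpace ℝ (Fin 2))
    (hx : x 0^2 + x 1^2 = 1) (hr : ‖r‖ = 1) (hd : 0 ≤ x 0 * r 0 + x 1 * r 1) :
    x + ρ • r ∉ closedBall (0 : EuclideanSpace ℝ (Fin 2)) 1 := by
  rw [mem_cb]
  intro h
  have hr2 := norm_sq2 r
  rw [hr] at hr2
  have e0 : (x + ρ • r) 0 = x 0 + ρ * r 0 := rfl
  have e1 : (x + ρ • r) 1 = x 1 + ρ * r 1 := rfl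
  rw [e0, e1] at h
  nlinarith [mul_nonneg hρ.le hd, mul_pos hρ hρ]

lemma two_fail (ρ : ℝ) (hρ : 0 < ρ) (r₁ r₂ : EuclideanSpace ℝ (Fin 2))
    (h1 : ‖r₁‖ = 1) (h2 : ‖r₂‖ = 1) :
    ∃ x ∈ closedBall (0 : EuclideanSpace ℝ (Fin 2)) 1,
      x + ρ • r₁ ∉ closedBall (0 : EuclideanSpace ℝ (Fin 2)) 1 ∧
      x + ρ • r₂ ∉ closedBall (0 : EuclideanSpace ℝ (Fin 2)) 1 := by
  have hpq : r₁ 0^2 + r₁ 1^2 = 1 := by have := norm_sq2 r₁; rw [h1] at this; nlinarith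
  rcases le_or_gt 0 (-(r₁ 1) * r₂ 0 + r₁ 0 * r₂ 1) with hd | hd
  · refine ⟨(!₂[-(r₁ 1), r₁ 0] : EuclideanSpace ℝ (Fin 2)), ?_, ?_, ?_⟩
    · rw [mem_cb]; simp; nlinarith
    · apply not_ill ρ hρ _ _ ?_ h1 ?_ <;> simp <;> nlinarith
    · apply not_ill ρ hρ _ _ ?_ h2 ?_ <;> simp <;> nlinarith
  · refine ⟨(!₂[r₁ 1, -(r₁ 0)] : EuclideanSpace ℝ (Fin 2)), ?_, ?_, ?_⟩
    · rw [mem_cb]; simp; nlinarith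
    · apply not_ill ρ hρ _ _ ?_ h1 ?_ <;> simp <;> nlinarith
    · apply not_ill ρ hρ _ _ ?_ h2 ?_ <;> simp <;> nlinarith

/-- Example (α): for the closed unit disc `B(o,1) ⊆ ℝ²`, `i(B(o,1),ρ) = 3` for `0 < ρ ≤ 1`
and `i(B(o,1),ρ) = ∞` for `ρ > 1`. -/
theorem iq_unit_disc (ρ : ℝ) :
    (0 < ρ → ρ ≤ 1 → iq (closedBall (0 : EuclideanSpace ℝ (Fin 2)) 1) ρ = 3) ∧
    (1 < ρ → iq (closedBall (0 : EuclideanSpace ℝ (Fin 2)) 1) ρ = ⊤) := by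
  classical
  constructor
  · intro hρ hρ1
    set c : ℝ := Real.sqrt 3 / 2 with hcdef
    have hc : c^2 = 3/4 := by
      rw [hcdef, div_pow, Real.sq_sqrt (by norm_num : (3:ℝ) ≥ 0)]; norm_num
    have hc0 : 0 < c := by rw [hcdef]; positivity
    set v0 : EuclideanSpace ℝ (Fin 2) := !₂[1, 0] with hv0
    set v1 : EuclideanSpace ℝ (Fin 2) := !₂[-(1/2), c] with hv1
    set v2 : EuclideanSpace ℝ (Fin 2) := !₂[-(1/2), -c] with hv2
    have h01 : v0 ≠ v1 := by
      intro h; have := congrArg (· 0) h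
      simp [hv0, hv1, Matrix.cons_val_zero] at this; norm_num at this
    have h02 : v0 ≠ v2 := by
      intro h; have := congrArg (· 0) h
      simp [hv0, hv2, Matrix.cons_val_zero] at this; norm_num at this
    have h12 : v1 ≠ v2 := by
      intro h; have := congrArg (· 1) h
      simp [hv1, hv2, Matrix.cons_val_one, Matrix.head_cons] at this; linarith
    refine le_antisymm (sInf_le ⟨{v0, v1, v2}, ?_, ?_, ?_⟩) (le_sInf ?_)
    · rw [Finset.card_insert_of_notMem (by simp [h01, h02]),
        Finset.card_insert_of_notMem (by simp [h12]), Finset.card_singleton]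
      rfl
    · intro r hr
      simp only [Finset.mem_insert, Finset.mem_singleton] at hr
      rcases hr with rfl | rfl | rfl
      · exact norm_eq_one_of _ (by simp [hv0])
      · exact norm_eq_one_of _ (by simp [hv1, Matrix.cons_val_zero, Matrix.cons_val_one, Matrix.head_cons]; nlinarith)
      · exact norm_eq_one_of _ (by simp [hv2, Matrix.cons_val_zero, Matrix.cons_val_one, Matrix.head_cons]; nlinarith)
    · intro x hx
      have hx' := (mem_cb x).mp hx
      have hs' : ‖x‖^2 = x 0^2 + x 1^2 := norm_sq2 x
      have hs1 : ‖x‖ ≤ 1 := by rwa [mem_closedBall, dist_zero_right] at hx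
      rcases key3 (x 0) (x 1) ‖x‖ ρ c hs' (norm_nonneg x) hs1 hρ hρ1 hc hc0.le
        with hP | hP | hP
      · refine ⟨v0, by simp, ?_⟩
        rw [mem_cb]
        have e0 : (x + ρ • v0) 0 = x 0 + ρ * 1 := rfl
        have e1 : (x + ρ • v0) 1 = x 1 + ρ * 0 := rfl
        rw [e0, e1]; nlinarith
      · refine ⟨v1, by simp, ?_⟩
        rw [mem_cb]
        have e0 : (x + ρ • v1) 0 = x 0 + ρ * (-(1/2)) := rfl
        have e1 : (x + ρ • v1) 1 = x 1 + ρ * c := rfl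
        rw [e0, e1]; nlinarith
      · refine ⟨v2, by simp, ?_⟩
        rw [mem_cb]
        have e0 : (x + ρ • v2) 0 = x 0 + ρ * (-(1/2)) := rfl
        have e1 : (x + ρ • v2) 1 = x 1 + ρ * (-c) := rfl
        rw [e0, e1]; nlinarith
    · rintro m ⟨s, hcard, hunit, hcov⟩
      rw [← hcard]
      have : 3 ≤ s.card := by
        by_contra hlt
        push_neg at hlt
        have h2 : s.card ≤ 2 := by omega
        obtain ⟨r0, hr0s, -⟩ := hcov 0 (mem_closedBall_self (by norm_num))
        obtain ⟨r₁, r₂, hr₁, hu2, hall⟩ :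
            ∃ r₁ r₂, r₁ ∈ s ∧ ‖r₂‖ = 1 ∧ ∀ r ∈ s, r = r₁ ∨ r = r₂ := by
          rcases lt_or_eq_of_le h2 with hlt1 | heq
          · exact ⟨r0, r0, hr0s, hunit r0 hr0s,
              fun r hr => Or.inl (Finset.card_le_one.mp (by omega) r hr r0 hr0s)⟩
          · obtain ⟨a, b, hab, hseq⟩ := Finset.card_eq_two.mp heq
            subst hseq
            exact ⟨a, b, by simp, hunit b (by simp),
              fun r hr => by simpa using Finset.mem_insert.mp hr⟩
        obtain ⟨x, hx, hx1, hx2⟩ := two_fail ρ hρ r₁ r₂ (hunit r₁ hr₁) hu2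
        obtain ⟨r, hrs, hmem⟩ := hcov x hx
        rcases hall r hrs with rfl | rfl
        · exact hx1 hmem
        · exact hx2 hmem
      exact_mod_cast this
  · intro h1
    rw [iq, sInf_eq_top]
    rintro b ⟨s, hcard, hunit, hcov⟩
    exfalso
    obtain ⟨r, hrs, hmem⟩ := hcov 0 (mem_closedBall_self (by norm_num))
    have hle : ‖(0 : EuclideanSpace ℝ (Fin 2)) + ρ • r‖ ≤ 1 := by
      rwa [mem_closedBall, dist_zero_right] at hmem
    rw [zero_add, norm_smul, hunit r hrs, mul_one, Real.norm_eq_abs,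
      abs_of_pos (lt_trans one_pos h1)] at hle
    linarith
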